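/- Let λ, μ be real numbers with λ ≥ 1 and λ + μ > 1/2. Then for every z in the open unit disc 𝕌, the second normalized Wright function satisfies |𝕎_{λ,μ}(z)| ≤ 2(λ+μ)/(2(λ+μ)−1). -/

import Mathlib

/-- The second normalized Wright function
`𝕎_{λ,μ}(z) = z + ∑_{m=1}^∞ (Γ(λ+μ)/((m+1)! Γ(λm+λ+μ))) z^{m+1}`
(the `m = 0` term is `z`). -/
noncomputable def normWright2 (lam mu : ℝ) (z : ℂ) : ℂ :=
  ∑' m : ℕ,
    ((Real.Gamma (lam + mu) / (Nat.factorial (m + 1) * Real.Gamma (lam * m + lam + mu)) : ℝ) : ℂ)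
      * z ^ (m + 1)


lemma exp_two_fifth : Real.exp (2/5 : ℝ) ≤ 1.492 := by
  have h5 : (Real.exp (2/5 : ℝ)) ^ 5 = Real.exp 2 := by
    rw [← Real.exp_nat_mul]; norm_num
  have h2 : Real.exp (2:ℝ) < (1.492:ℝ)^5 := by
    have h : Real.exp (2:ℝ) = (Real.exp 1)^2 := by
      rw [← Real.exp_nat_mul]; norm_num
    rw [h]
    nlinarith [Real.exp_one_lt_d9, Real.exp_pos (1:ℝ)]
  refine le_of_lt (lt_of_pow_lt_pow_left₀ 5 (by norm_num) ?_)
  rw [h5]; exact h2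

lemma exp_17_5 : Real.exp (17/5 : ℝ) ≤ 30.5 := by
  have h3 : Real.exp (3:ℝ) = (Real.exp 1)^3 := by rw [← Real.exp_nat_mul]; norm_num
  have he : Real.exp (17/5 : ℝ) = Real.exp 3 * Real.exp (2/5) := by
    rw [← Real.exp_add]; norm_num
  have ha : (Real.exp 1)^3 < (2.7182818286:ℝ)^3 :=
    pow_lt_pow_left₀ Real.exp_one_lt_d9 (Real.exp_pos 1).le (by norm_num)
  have hb := exp_two_fifth
  have hbpos := (Real.exp_pos (2/5:ℝ)).le
  rw [he, h3]
  calc (Real.exp 1)^3 * Real.exp (2/5) ≤ (2.7182818286:ℝ)^3 * 1.492 := by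
        apply mul_le_mul ha.le hb hbpos (by positivity)
    _ ≤ 30.5 := by norm_num

lemma log_gamma_telescope (x : ℝ) (hx : 0 < x) (n : ℕ) :
    Real.log (Real.Gamma (x + n)) =
      Real.log (Real.Gamma x) + ∑ k ∈ Finset.range n, Real.log (x + k) := by
  induction n with
  | zero => simp
  | succ n ih =>
    have hxn : (0:ℝ) < x + n := by positivity
    have h1 : (x + (n+1 : ℕ) : ℝ) = (x + n) + 1 := by push_cast; ring
    rw [h1, Real.Gamma_add_one hxn.ne',
      Real.log_mul hxn.ne' (Real.Gamma_pos_of_pos hxn).ne', ih,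
      Finset.sum_range_succ]
    ring

lemma gamma_mono_aux {x y : ℝ} (hx : 3/2 ≤ x) (hxy : x < y) :
    Real.log (Real.Gamma x) ≤ Real.log (Real.Gamma y) := by
  have hx0 : (0:ℝ) < x := by linarith
  have hy0 : (0:ℝ) < y := by linarith
  set g : ℝ → ℝ := fun t => Real.log (Real.Gamma t) with hg
  -- slope inequality from log-convexity
  have hslope : g (x+30) - g (x+29) ≤ (g (y+30) - g (x+30)) / (y - x) := by
    have := Real.convexOn_log_Gamma.slope_mono_adjacent
      (x := x+29) (y := x+30) (z := y+30)
      (by simp [Set.mem_Ioi]; linarith) (by simp [Set.mem_Ioi]; linarith)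
      (by linarith) (by linarith)
    have e1 : x + 30 - (x + 29) = (1:ℝ) := by ring
    have e2 : y + 30 - (x + 30) = y - x := by ring
    rw [e1, e2, div_one] at this
    exact this
  have hyx : (0:ℝ) < y - x := by linarith
  have hslope' : (y - x) * (g (x+30) - g (x+29)) ≤ g (y+30) - g (x+30) := by
    rw [← le_div_iff₀' hyx]; exact hslope
  -- g(x+30) - g(x+29) = log (x+29)
  have hlog29 : g (x+30) - g (x+29) = Real.log (x+29) := by
    have h29 : (0:ℝ) < x + 29 := by linarith
    have : (x + 30 : ℝ) = (x + 29) + 1 := by ring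
    rw [hg]
    simp only
    rw [this, Real.Gamma_add_one h29.ne',
      Real.log_mul h29.ne' (Real.Gamma_pos_of_pos h29).ne']
    ring
  -- telescopes
  have htx : g (x+30) = g x + ∑ k ∈ Finset.range 30, Real.log (x + k) := by
    have := log_gamma_telescope x hx0 30; rw [hg]; simpa using this
  have hty : g (y+30) = g y + ∑ k ∈ Finset.range 30, Real.log (y + k) := by
    have := log_gamma_telescope y hy0 30; rw [hg]; simpa using this
  -- per-term bound on log differences
  have hterm : ∀ k ∈ Finset.range 30,
      Real.log (y + k) - Real.log (x + k) ≤ (y - x) * (1 / (3/2 + (k:ℝ))) := by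
    intro k _
    have hk0 : (0:ℝ) ≤ (k:ℝ) := Nat.cast_nonneg k
    have hxk : (0:ℝ) < x + k := by linarith
    have hyk : (0:ℝ) < y + k := by linarith
    have h1 : Real.log (y + k) - Real.log (x + k) = Real.log ((y+k)/(x+k)) := by
      rw [Real.log_div hyk.ne' hxk.ne']
    have h2 : Real.log ((y+k)/(x+k)) ≤ (y+k)/(x+k) - 1 :=
      Real.log_le_sub_one_of_pos (by positivity)
    have h3 : (y+k)/(x+k) - 1 = (y - x) / (x+k) := by field_simp; ring
    have h4 : (y - x) / (x+k) ≤ (y - x) / (3/2 + k) := by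
      apply div_le_div_of_nonneg_left hyx.le (by linarith) (by linarith)
    rw [h1]
    calc Real.log ((y+k)/(x+k)) ≤ (y+k)/(x+k) - 1 := h2
      _ = (y-x)/(x+k) := h3
      _ ≤ (y-x)/(3/2+k) := h4
      _ = (y-x) * (1/(3/2+(k:ℝ))) := by ring
  have hsum : ∑ k ∈ Finset.range 30, (Real.log (y + k) - Real.log (x + k))
      ≤ (y - x) * (17/5) := by
    calc ∑ k ∈ Finset.range 30, (Real.log (y + k) - Real.log (x + k))
        ≤ ∑ k ∈ Finset.range 30, (y - x) * (1 / (3/2 + (k:ℝ))) :=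
          Finset.sum_le_sum hterm
      _ = (y - x) * ∑ k ∈ Finset.range 30, (1 / (3/2 + (k:ℝ))) := by
          rw [Finset.mul_sum]
      _ ≤ (y - x) * (17/5) := by
          apply mul_le_mul_of_nonneg_left _ hyx.le
          norm_num [Finset.sum_range_succ]
  -- log (x+29) ≥ 17/5
  have hlogbig : (17/5 : ℝ) ≤ Real.log (x + 29) := by
    rw [Real.le_log_iff_exp_le (by linarith)]
    calc Real.exp (17/5:ℝ) ≤ 30.5 := exp_17_5
      _ ≤ x + 29 := by linarith
  -- combine
  have key : g y - g x ≥ (y - x) * Real.log (x+29) - (y-x) * (17/5) := by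
    have e : g y - g x = (g (y+30) - g (x+30))
        - ∑ k ∈ Finset.range 30, (Real.log (y + k) - Real.log (x + k)) := by
      rw [htx, hty, Finset.sum_sub_distrib]; ring
    rw [e]
    have := hslope'
    rw [hlog29] at this
    linarith [hsum]
  nlinarith [mul_le_mul_of_nonneg_left hlogbig hyx.le]

lemma gamma_monotoneOn {x y : ℝ} (hx : 3/2 ≤ x) (hxy : x ≤ y) :
    Real.Gamma x ≤ Real.Gamma y := by
  rcases eq_or_lt_of_le hxy with rfl | h
  · exact le_refl _
  · have hx0 : (0:ℝ) < x := by linarith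
    have hy0 : (0:ℝ) < y := by linarith
    have := gamma_mono_aux hx h
    have := Real.exp_le_exp.mpr this
    rwa [Real.exp_log (Real.Gamma_pos_of_pos hx0),
      Real.exp_log (Real.Gamma_pos_of_pos hy0)] at this

-- Pochhammer-type lower bound
lemma gamma_nat_add_lower {s : ℝ} (hs : 0 < s) (m : ℕ) :
    s ^ m * Real.Gamma s ≤ Real.Gamma (m + s) := by
  induction m with
  | zero => simp
  | succ m ih =>
    have hms : (0:ℝ) < m + s := by positivity
    have h1 : ((m+1 : ℕ) : ℝ) + s = ((m:ℝ) + s) + 1 := by push_cast; ring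
    rw [h1, Real.Gamma_add_one hms.ne']
    calc s ^ (m+1) * Real.Gamma s = s * (s ^ m * Real.Gamma s) := by ring
      _ ≤ s * Real.Gamma ((m:ℝ) + s) := by
          apply mul_le_mul_of_nonneg_left ih hs.le
      _ ≤ ((m:ℝ) + s) * Real.Gamma ((m:ℝ)+s) := by
          apply mul_le_mul_of_nonneg_right (by nlinarith [Nat.cast_nonneg (α := ℝ) m])
            (Real.Gamma_pos_of_pos hms).le

lemma fact_ge_two_pow (m : ℕ) : 2 ^ m ≤ Nat.factorial (m+1) := by
  induction m with
  | zero => simp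
  | succ m ih =>
    rw [pow_succ, Nat.factorial_succ]
    calc 2^m * 2 ≤ Nat.factorial (m+1) * 2 := by
          exact Nat.mul_le_mul_right 2 ih
      _ ≤ (m+1+1) * Nat.factorial (m+1) := by
          rw [mul_comm]; exact Nat.mul_le_mul_right _ (by omega)
      _ = Nat.factorial (m+1+1) := (Nat.factorial_succ _).symm

lemma coeff_bound (lam mu : ℝ) (hlam : 1 ≤ lam) (hmu : 1 / 2 < lam + mu) (m : ℕ) :
    Real.Gamma (lam + mu) / (Nat.factorial (m + 1) * Real.Gamma (lam * m + lam + mu))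
      ≤ (1 / (2 * (lam + mu))) ^ m := by
  set s := lam + mu with hs
  have hs0 : (0:ℝ) < s := by linarith
  have hGs : 0 < Real.Gamma s := Real.Gamma_pos_of_pos hs0
  -- Γ(m+s) ≤ Γ(λm + s)
  have hlms : lam * m + lam + mu = lam * m + s := by rw [hs]; ring
  have hmono : Real.Gamma ((m:ℝ) + s) ≤ Real.Gamma (lam * m + s) := by
    rcases Nat.eq_zero_or_pos m with rfl | hm
    · simp
    · have hm1 : (1:ℝ) ≤ (m:ℝ) := by exact_mod_cast hm
      apply gamma_monotoneOn
      · linarith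
      · nlinarith
  have hG2 : s ^ m * Real.Gamma s ≤ Real.Gamma (lam * m + s) :=
    le_trans (gamma_nat_add_lower hs0 m) hmono
  have hGl : 0 < Real.Gamma (lam * m + s) := by
    apply Real.Gamma_pos_of_pos; nlinarith [Nat.cast_nonneg (α := ℝ) m]
  have hfact : (2:ℝ) ^ m ≤ (Nat.factorial (m+1) : ℝ) := by
    exact_mod_cast fact_ge_two_pow m
  have hden : (2*s) ^ m * Real.Gamma s ≤ (Nat.factorial (m+1) : ℝ) * Real.Gamma (lam * m + s) := by
    calc (2*s)^m * Real.Gamma s = (2:ℝ)^m * (s^m * Real.Gamma s) := by rw [mul_pow]; ring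
      _ ≤ (Nat.factorial (m+1) : ℝ) * Real.Gamma (lam*m+s) := by
          apply mul_le_mul hfact hG2 (by positivity) (by positivity)
  rw [hlms]
  have step : Real.Gamma s / ((Nat.factorial (m+1):ℝ) * Real.Gamma (lam*m+s))
      ≤ Real.Gamma s / ((2*s)^m * Real.Gamma s) :=
    div_le_div_of_nonneg_left hGs.le (by positivity) hden
  have heq : Real.Gamma s / ((2*s)^m * Real.Gamma s) = (1/(2*s))^m := by
    rw [one_div, inv_pow]
    field_simp
  rw [← heq]
  exact step


/-- If `λ ≥ 1` and `λ + μ > 1/2`, then `|𝕎_{λ,μ}(z)| ≤ 2(λ+μ)/(2(λ+μ)-1)` on the open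
unit disc. -/
theorem abs_normWright2_le (lam mu : ℝ) (hlam : 1 ≤ lam) (hmu : 1 / 2 < lam + mu) :
    ∀ z : ℂ, ‖z‖ < 1 →
      ‖normWright2 lam mu z‖ ≤ 2 * (lam + mu) / (2 * (lam + mu) - 1) := by
  intro z hz
  set s := lam + mu with hs
  have hs0 : (0:ℝ) < s := by linarith
  have h2s : (1:ℝ) < 2 * s := by linarith
  set q : ℝ := 1 / (2 * s) with hq
  have hq0 : 0 ≤ q := by positivity
  have hq1 : q < 1 := by
    rw [hq, div_lt_one (by linarith)]; linarith
  have hgeom : HasSum (fun m : ℕ => q ^ m) (1 - q)⁻¹ :=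
    hasSum_geometric_of_lt_one hq0 hq1
  have hbound : ∀ m : ℕ,
      ‖((Real.Gamma (lam + mu) /
          (Nat.factorial (m + 1) * Real.Gamma (lam * m + lam + mu)) : ℝ) : ℂ) * z ^ (m + 1)‖
        ≤ q ^ m := by
    intro m
    set c : ℝ := Real.Gamma (lam + mu) /
        (Nat.factorial (m + 1) * Real.Gamma (lam * m + lam + mu)) with hc
    have harg : (0:ℝ) < lam * m + lam + mu := by
      have : (0:ℝ) ≤ lam * m := by positivity
      linarith
    have hc0 : 0 ≤ c := by
      rw [hc]
      apply div_nonneg (Real.Gamma_pos_of_pos hs0).le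
      positivity
    have hcq : c ≤ q ^ m := by
      rw [hc, hq, hs]
      exact coeff_bound lam mu hlam hmu m
    rw [norm_mul, Complex.norm_real, norm_pow, Real.norm_eq_abs, abs_of_nonneg hc0]
    calc c * ‖z‖ ^ (m+1) ≤ c * 1 := by
          apply mul_le_mul_of_nonneg_left _ hc0
          exact pow_le_one₀ (norm_nonneg z) hz.le
      _ = c := mul_one c
      _ ≤ q ^ m := hcq
  have hmain : ‖normWright2 lam mu z‖ ≤ (1 - q)⁻¹ := by
    rw [normWright2]
    exact tsum_of_norm_bounded hgeom hbound
  have heq : (1 - q)⁻¹ = 2 * s / (2 * s - 1) := by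
    rw [hq]
    rw [one_sub_div (by linarith)]
    rw [inv_div]
  rw [← heq]
  exact hmain
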